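/- Let n ≥ 1 and let G be a facet of Δ(n) with |G| = r ≥ 2. Then the following are equivalent: (1) for every vertex v ∈ G there exists a facet H of Δ(n) preceding G in the order O with G \ {v} ⊆ H; (2) every vertex of G satisfies the B-condition in G. (Condition (1) says G attaches along its entire boundary in the shelling order O, i.e., G is a homology facet.) -/

import Mathlib

/-- Vertices of `Δ(n)`: integer triples. -/
abbrev V : Type := ℕ × ℕ × ℕ

/-- The strict componentwise order on triples. -/
def slt (u v : V) : Prop := u.1 < v.1 ∧ u.2.1 < v.2.1 ∧ u.2.2 < v.2.2

/-- A face of `Δ(n)`: a finite subset of `{1,…,n}³` that is a chain under `slt`. -/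
def IsFace (n : ℕ) (F : Finset V) : Prop :=
  (∀ v ∈ F, v.1 ∈ Finset.Icc 1 n ∧ v.2.1 ∈ Finset.Icc 1 n ∧ v.2.2 ∈ Finset.Icc 1 n) ∧
  (∀ u ∈ F, ∀ v ∈ F, u ≠ v → slt u v ∨ slt v u)

/-- A facet of `Δ(n)`: an inclusion-maximal face. -/
def IsFacet (n : ℕ) (F : Finset V) : Prop :=
  IsFace n F ∧ ∀ G : Finset V, IsFace n G → F ⊆ G → F = G

/-- The σ-word of a list of vertices: concatenate the coordinates in order. -/
def sigmaWord (L : List V) : List ℕ :=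
  L.foldr (fun v acc => v.1 :: v.2.1 :: v.2.2 :: acc) []

/-- `F` precedes `G` in the order `O`: facets of larger cardinality come first, and
facets of equal cardinality are ordered by lexicographic order on their σ-words. -/
def OPrec (F G : Finset V) : Prop :=
  G.card < F.card ∨
    (F.card = G.card ∧ ∃ LF LG : List V, LF.Chain' slt ∧ LG.Chain' slt ∧
      LF.toFinset = F ∧ LG.toFinset = G ∧
      List.Lex (· < ·) (sigmaWord LF) (sigmaWord LG))

/-- The `ℓ`-th vertex of the (increasingly sorted) list `L` satisfies the B-condition. -/
def BCond (L : List V) (ℓ : ℕ) (h : ℓ < L.length) : Prop :=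
  (ℓ = 0 ∧ (1 < (L.get ⟨ℓ, h⟩).1 ∨ 1 < (L.get ⟨ℓ, h⟩).2.1 ∨ 1 < (L.get ⟨ℓ, h⟩).2.2)) ∨
  (0 < ℓ ∧
    (1 < (L.get ⟨ℓ, h⟩).1 - (L.get ⟨ℓ - 1, by omega⟩).1 ∨
     1 < (L.get ⟨ℓ, h⟩).2.1 - (L.get ⟨ℓ - 1, by omega⟩).2.1 ∨
     1 < (L.get ⟨ℓ, h⟩).2.2 - (L.get ⟨ℓ - 1, by omega⟩).2.2))

instance : IsTrans V slt :=
  ⟨fun _ _ _ h1 h2 => ⟨h1.1.trans h2.1, h1.2.1.trans h2.2.1, h1.2.2.trans h2.2.2⟩⟩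
instance : IsIrrefl V slt := ⟨fun _ h => lt_irrefl _ h.1⟩
instance : IsAntisymm V slt := ⟨fun _ _ h1 h2 => absurd (h1.1.trans h2.1) (lt_irrefl _)⟩

lemma slt_trans {a b c : V} (h1 : slt a b) (h2 : slt b c) : slt a c :=
  ⟨h1.1.trans h2.1, h1.2.1.trans h2.2.1, h1.2.2.trans h2.2.2⟩

lemma chain_get {L : List V} (hs : L.Chain' slt) {i j : ℕ} (hi : i < L.length)
    (hj : j < L.length) (hij : i < j) : slt L[i] L[j] :=
  (List.pairwise_iff_getElem.mp (List.isChain_iff_pairwise.mp hs)) i j hi hj hij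

lemma chain_nodup {L : List V} (hs : L.Chain' slt) : L.Nodup :=
  (List.isChain_iff_pairwise.mp hs).nodup

lemma chain_unique {L1 L2 : List V} (h1 : L1.Chain' slt) (h2 : L2.Chain' slt)
    (ht : L1.toFinset = L2.toFinset) : L1 = L2 :=
  List.Perm.eq_of_pairwise'
    (List.isChain_iff_pairwise.mp h1) (List.isChain_iff_pairwise.mp h2)
    (List.perm_of_nodup_nodup_toFinset_eq (chain_nodup h1) (chain_nodup h2) ht)

def pr (c : Fin 3) (v : V) : ℕ := if c = 0 then v.1 else if c = 1 then v.2.1 else v.2.2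

lemma slt_iff_pr {u v : V} : slt u v ↔ ∀ c, pr c u < pr c v := by
  constructor
  · rintro ⟨h1, h2, h3⟩ c; fin_cases c <;> simpa [pr]
  · intro h
    exact ⟨by simpa [pr] using h 0, by simpa [pr] using h 1, by simpa [pr] using h 2⟩

lemma pr_range {n : ℕ} {F : Finset V} (hF : IsFace n F) {v : V} (hv : v ∈ F) (c : Fin 3) :
    1 ≤ pr c v ∧ pr c v ≤ n := by
  obtain ⟨h1, h2, h3⟩ := hF.1 v hv
  rw [Finset.mem_Icc] at h1 h2 h3
  fin_cases c <;> simp [pr] <;> omega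

lemma mem_of_getElem {L : List V} {G : Finset V} (ht : L.toFinset = G) {i : ℕ}
    (hi : i < L.length) : L[i] ∈ G := by
  rw [← ht, List.mem_toFinset]; exact List.getElem_mem hi

-- sigmaWord lemmas
lemma sigmaWord_cons (a : V) (A : List V) :
    sigmaWord (a :: A) = a.1 :: a.2.1 :: a.2.2 :: sigmaWord A := rfl

lemma lex_of_mid (A : List V) (x y : V) (B C : List V)
    (h : x.1 < y.1 ∨ (x.1 = y.1 ∧ (x.2.1 < y.2.1 ∨ (x.2.1 = y.2.1 ∧ x.2.2 < y.2.2)))) :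
    List.Lex (· < ·) (sigmaWord (A ++ x :: B)) (sigmaWord (A ++ y :: C)) := by
  induction A with
  | nil =>
    rw [List.nil_append, List.nil_append, sigmaWord_cons, sigmaWord_cons]
    rcases h with h | ⟨e1, h⟩
    · exact List.Lex.rel h
    · rw [e1]
      rcases h with h | ⟨e2, h⟩
      · exact List.Lex.cons (List.Lex.rel h)
      · rw [e2]; exact List.Lex.cons (List.Lex.cons (List.Lex.rel h))
  | cons a A ih =>
    rw [List.cons_append, List.cons_append, sigmaWord_cons, sigmaWord_cons]
    exact List.Lex.cons (List.Lex.cons (List.Lex.cons ih))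

lemma not_lex_self (l : List ℕ) : ¬ List.Lex (· < ·) l l := by
  induction l with
  | nil => intro h; cases h
  | cons a l ih =>
    intro h
    cases h with
    | cons h => exact ih h
    | rel h => exact lt_irrefl _ h

lemma lex_cons_inv {a b : ℕ} {s t : List ℕ} (h : List.Lex (· < ·) (a :: s) (b :: t)) :
    a < b ∨ (a = b ∧ List.Lex (· < ·) s t) := by
  cases h with
  | rel h => exact Or.inl h
  | cons h => exact Or.inr ⟨rfl, h⟩

lemma not_lex_of_ge (A : List V) (v w : V) (B : List V)
    (h1 : v.1 ≤ w.1) (h2 : v.2.1 ≤ w.2.1) (h3 : v.2.2 ≤ w.2.2) :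
    ¬ List.Lex (· < ·) (sigmaWord (A ++ w :: B)) (sigmaWord (A ++ v :: B)) := by
  induction A with
  | nil =>
    rw [List.nil_append, List.nil_append, sigmaWord_cons, sigmaWord_cons]
    intro hl
    rcases lex_cons_inv hl with h | ⟨e1, hl⟩; · omega
    rcases lex_cons_inv hl with h | ⟨e2, hl⟩; · omega
    rcases lex_cons_inv hl with h | ⟨e3, hl⟩; · omega
    exact not_lex_self _ hl
  | cons a A ih =>
    rw [List.cons_append, List.cons_append, sigmaWord_cons, sigmaWord_cons]
    intro hl
    rcases lex_cons_inv hl with h | ⟨_, hl⟩; · exact lt_irrefl _ h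
    rcases lex_cons_inv hl with h | ⟨_, hl⟩; · exact lt_irrefl _ h
    rcases lex_cons_inv hl with h | ⟨_, hl⟩; · exact lt_irrefl _ h
    exact ih hl

-- facet extension
def cube (n : ℕ) : Finset V := Finset.Icc 1 n ×ˢ (Finset.Icc 1 n ×ˢ Finset.Icc 1 n)

lemma face_subset_cube {n : ℕ} {F : Finset V} (hF : IsFace n F) : F ⊆ cube n := by
  intro v hv
  obtain ⟨a, b, c⟩ := hF.1 v hv
  exact Finset.mem_product.mpr ⟨a, Finset.mem_product.mpr ⟨b, c⟩⟩

lemma exists_facet_ext (n : ℕ) : ∀ (k : ℕ) (F : Finset V), IsFace n F →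
    (cube n).card ≤ F.card + k → ∃ H, IsFacet n H ∧ F ⊆ H := by
  intro k
  induction k with
  | zero =>
    intro F hF hc
    refine ⟨F, ⟨hF, fun G hGf hFG => ?_⟩, Finset.Subset.refl F⟩
    exact Finset.eq_of_subset_of_card_le hFG
      (le_trans (Finset.card_le_card (face_subset_cube hGf)) (by omega))
  | succ k ih =>
    intro F hF hc
    by_cases hmax : ∀ G, IsFace n G → F ⊆ G → F = G
    · exact ⟨F, ⟨hF, hmax⟩, Finset.Subset.refl F⟩
    · push_neg at hmax
      obtain ⟨G, hGf, hFG, hne⟩ := hmax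
      have hss : F ⊂ G := ⟨hFG, fun h => hne (Finset.Subset.antisymm hFG h)⟩
      have := Finset.card_lt_card hss
      obtain ⟨H, hH, hGH⟩ := ih G hGf (by omega)
      exact ⟨H, hH, hFG.trans hGH⟩

lemma face_to_facet {n : ℕ} {F : Finset V} (hF : IsFace n F) : ∃ H, IsFacet n H ∧ F ⊆ H :=
  exists_facet_ext n (cube n).card F hF (by omega)

lemma facet_insert_absurd {n : ℕ} {G : Finset V} (hG : IsFacet n G) {u : V}
    (hrange : ∀ c, 1 ≤ pr c u ∧ pr c u ≤ n)
    (hcomp : ∀ x ∈ G, slt u x ∨ slt x u) : False := by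
  have hu : u ∉ G := by
    intro hu
    rcases hcomp u hu with h | h <;> exact lt_irrefl _ h.1
  have h0 := hrange 0; have h1 := hrange 1; have h2 := hrange 2
  rw [show pr 0 u = u.1 from rfl] at h0
  rw [show pr 1 u = u.2.1 from rfl] at h1
  rw [show pr 2 u = u.2.2 from rfl] at h2
  have hface : IsFace n (insert u G) := by
    constructor
    · intro v hv
      rcases Finset.mem_insert.mp hv with rfl | hv
      · refine ⟨?_, ?_, ?_⟩ <;> rw [Finset.mem_Icc] <;> omega
      · exact hG.1.1 v hv
    · intro a ha b hb hab
      rw [Finset.mem_insert] at ha hb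
      rcases ha with rfl | ha <;> rcases hb with rfl | hb
      · exact absurd rfl hab
      · exact hcomp b hb
      · exact (hcomp a ha).symm
      · exact hG.1.2 a ha b hb hab
  have heq := hG.2 _ hface (Finset.subset_insert u G)
  exact hu (heq ▸ Finset.mem_insert_self u G)

-- M lemmas
lemma M1 {n : ℕ} {G : Finset V} (hG : IsFacet n G) {L : List V} (hs : L.Chain' slt)
    (ht : L.toFinset = G) (h0 : 0 < L.length) : ∃ c, pr c (L[0]) = 1 := by
  by_contra hc
  push_neg at hc
  have hmem := mem_of_getElem ht h0
  have h2 : ∀ c, 2 ≤ pr c L[0] := by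
    intro c; have := (pr_range hG.1 hmem c).1; have := hc c; omega
  set u : V := (L[0].1 - 1, L[0].2.1 - 1, L[0].2.2 - 1) with hud
  have hpru : ∀ c, pr c u = pr c L[0] - 1 := by
    intro c; fin_cases c <;> simp [pr, hud]
  have hult : slt u L[0] := slt_iff_pr.mpr fun c => by have := h2 c; have := hpru c; omega
  have hcomp : ∀ x ∈ G, slt u x ∨ slt x u := by
    intro x hx
    rw [← ht, List.mem_toFinset, List.mem_iff_getElem] at hx
    obtain ⟨j, hj, rfl⟩ := hx
    left
    rcases Nat.eq_zero_or_pos j with rfl | hj0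
    · exact hult
    · exact slt_trans hult (chain_get hs h0 hj hj0)
  exact facet_insert_absurd hG (fun c => ⟨by have := hpru c; have := h2 c; omega,
      by have := hpru c; have := (pr_range hG.1 hmem c).2; omega⟩) hcomp

lemma M2 {n : ℕ} {G : Finset V} (hG : IsFacet n G) {L : List V} (hs : L.Chain' slt)
    (ht : L.toFinset = G) {i : ℕ} (hi : i + 1 < L.length) :
    ∃ c, pr c (L[i+1]) = pr c (L[i]'(by omega)) + 1 := by
  by_contra hc
  push_neg at hc
  have hii : i < L.length := by omega
  have hlt := chain_get hs hii hi (by omega)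
  have h2 : ∀ c, pr c (L[i]'hii) + 2 ≤ pr c L[i+1] := by
    intro c; have := slt_iff_pr.mp hlt c; have := hc c; omega
  set u : V := ((L[i]'hii).1 + 1, (L[i]'hii).2.1 + 1, (L[i]'hii).2.2 + 1) with hud
  have hpru : ∀ c, pr c u = pr c (L[i]'hii) + 1 := by
    intro c; fin_cases c <;> simp [pr, hud]
  have h1u : slt (L[i]'hii) u := slt_iff_pr.mpr fun c => by have := hpru c; omega
  have h2u : slt u L[i+1] := slt_iff_pr.mpr fun c => by have := hpru c; have := h2 c; omega
  have hcomp : ∀ x ∈ G, slt u x ∨ slt x u := by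
    intro x hx
    rw [← ht, List.mem_toFinset, List.mem_iff_getElem] at hx
    obtain ⟨j, hj, rfl⟩ := hx
    rcases le_or_gt j i with hji | hji
    · right
      rcases eq_or_lt_of_le hji with rfl | hji'
      · exact h1u
      · exact slt_trans (chain_get hs hj hii hji') h1u
    · left
      rcases eq_or_lt_of_le (show i + 1 ≤ j from hji) with rfl | hji'
      · exact h2u
      · exact slt_trans h2u (chain_get hs hi hj hji')
  exact facet_insert_absurd hG (fun c => ⟨by have := hpru c; omega,
      by have := hpru c; have := h2 c; have := (pr_range hG.1 (mem_of_getElem ht hi) c).2; omega⟩) hcomp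

lemma M3 {n : ℕ} {G : Finset V} (hG : IsFacet n G) {L : List V} (hs : L.Chain' slt)
    (ht : L.toFinset = G) (h0 : 0 < L.length) :
    ∃ c, pr c (L[L.length - 1]'(by omega)) = n := by
  by_contra hc
  push_neg at hc
  have hlast : L.length - 1 < L.length := by omega
  have hmem := mem_of_getElem ht hlast
  have h2 : ∀ c, pr c (L[L.length - 1]'hlast) + 1 ≤ n := by
    intro c; have := (pr_range hG.1 hmem c).2; have := hc c; omega
  set u : V := ((L[L.length-1]'hlast).1 + 1, (L[L.length-1]'hlast).2.1 + 1,
      (L[L.length-1]'hlast).2.2 + 1) with hud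
  have hpru : ∀ c, pr c u = pr c (L[L.length-1]'hlast) + 1 := by
    intro c; fin_cases c <;> simp [pr, hud]
  have h1u : slt (L[L.length-1]'hlast) u := slt_iff_pr.mpr fun c => by have := hpru c; omega
  have hcomp : ∀ x ∈ G, slt u x ∨ slt x u := by
    intro x hx
    rw [← ht, List.mem_toFinset, List.mem_iff_getElem] at hx
    obtain ⟨j, hj, rfl⟩ := hx
    right
    rcases eq_or_lt_of_le (show j ≤ L.length - 1 by omega) with hje | hjl
    · exact hje ▸ h1u
    · exact slt_trans (chain_get hs hj hlast hjl) h1u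
  have hrange : ∀ c, 1 ≤ pr c u ∧ pr c u ≤ n := by
    intro c
    have := hpru c
    have := (pr_range hG.1 hmem c).1
    have := h2 c
    omega
  exact facet_insert_absurd hG hrange hcomp

-- list surgery
lemma chain'_set {L : List V} (hs : L.Chain' slt) {ℓ : ℕ} (hℓ : ℓ < L.length) {w : V}
    (hb : ∀ i (hi : i < L.length), i < ℓ → slt L[i] w)
    (ha : ∀ j (hj : j < L.length), ℓ < j → slt w L[j]) :
    (L.set ℓ w).Chain' slt := by
  show List.IsChain slt (L.set ℓ w)
  rw [List.isChain_iff_pairwise, List.pairwise_iff_getElem]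
  intro i j hi hj hij
  simp only [List.length_set] at hi hj
  rw [List.getElem_set, List.getElem_set]
  by_cases h1 : ℓ = i
  · subst h1
    rw [if_pos rfl, if_neg (by omega)]
    exact ha j hj (by omega)
  · rw [if_neg h1]
    by_cases h2 : ℓ = j
    · subst h2
      rw [if_pos rfl]
      exact hb i hi (by omega)
    · rw [if_neg h2]
      exact chain_get hs hi hj hij

lemma toFinset_set {L : List V} (hs : L.Chain' slt) {ℓ : ℕ} (hℓ : ℓ < L.length) {w : V}
    (hw : ∀ j (hj : j < L.length), j ≠ ℓ → w ≠ L[j]) :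
    (L.set ℓ w).toFinset = insert w (L.toFinset.erase (L[ℓ])) := by
  have hnd := chain_nodup hs
  ext x
  simp only [List.mem_toFinset, Finset.mem_insert, Finset.mem_erase, List.mem_iff_getElem,
    List.length_set, List.getElem_set]
  constructor
  · rintro ⟨i, hi, hx⟩
    by_cases h1 : ℓ = i
    · rw [if_pos h1] at hx; exact Or.inl hx.symm
    · rw [if_neg h1] at hx
      refine Or.inr ⟨?_, ⟨i, hi, hx⟩⟩
      rw [← hx]
      intro he
      exact h1 (((List.Nodup.getElem_inj_iff hnd).mp he).symm)
  · rintro (rfl | ⟨hxv, i, hi, hx⟩)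
    · exact ⟨ℓ, hℓ, by rw [if_pos rfl]⟩
    · refine ⟨i, hi, ?_⟩
      have hne : ℓ ≠ i := by
        intro h
        subst h
        exact hxv hx.symm
      rw [if_neg hne]
      exact hx

lemma key {n : ℕ} {G : Finset V} (hG : IsFacet n G) {L : List V} (hs : L.Chain' slt)
    (ht : L.toFinset = G) {ℓ : ℕ} (hℓ : ℓ < L.length) {w : V}
    (hle : ∀ c, pr c w ≤ pr c L[ℓ])
    (hlex : w.1 < L[ℓ].1 ∨ (w.1 = L[ℓ].1 ∧ (w.2.1 < L[ℓ].2.1 ∨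
      (w.2.1 = L[ℓ].2.1 ∧ w.2.2 < L[ℓ].2.2))))
    (hlow : ∀ c, 1 ≤ pr c w)
    (hprev : 0 < ℓ → slt (L[ℓ-1]'(by omega)) w) :
    ∃ H : Finset V, IsFacet n H ∧ OPrec H G ∧ G.erase L[ℓ] ⊆ H := by
  have hnd := chain_nodup hs
  have hcard : G.card = L.length := by rw [← ht, List.toFinset_card_of_nodup hnd]
  have hvmem : L[ℓ] ∈ G := mem_of_getElem ht hℓ
  -- w compared with the other vertices
  have hwlt : ∀ j (hj : j < L.length), ℓ < j → slt w L[j] := by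
    intro j hj hℓj
    exact slt_iff_pr.mpr fun c =>
      lt_of_le_of_lt (hle c) (slt_iff_pr.mp (chain_get hs hℓ hj hℓj) c)
  have hltw : ∀ i (hi : i < L.length), i < ℓ → slt L[i] w := by
    intro i hi hiℓ
    have h0 : 0 < ℓ := by omega
    have hp := hprev h0
    rcases eq_or_lt_of_le (show i ≤ ℓ - 1 by omega) with rfl | hlt
    · exact hp
    · exact slt_trans (chain_get hs hi (by omega) hlt) hp
  have hwne : ∀ j (hj : j < L.length), j ≠ ℓ → w ≠ L[j] := by
    intro j hj hjℓ he
    rcases Nat.lt_or_ge j ℓ with h | h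
    · have hx := hltw j hj h
      rw [← he] at hx
      exact lt_irrefl _ hx.1
    · have hx := hwlt j hj (by omega)
      rw [← he] at hx
      exact lt_irrefl _ hx.1
  have hwnev : w ≠ L[ℓ] := by
    rcases hlex with h | ⟨e1, h | ⟨e2, h⟩⟩ <;> intro he <;> rw [he] at h <;> exact lt_irrefl _ h
  have hwnotin : w ∉ G.erase L[ℓ] := by
    intro hmem
    rw [Finset.mem_erase, ← ht, List.mem_toFinset, List.mem_iff_getElem] at hmem
    obtain ⟨hne, j, hj, hje⟩ := hmem
    by_cases hjl : j = ℓ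
    · subst hjl
      exact hne hje.symm
    · exact hwne j hj hjl hje.symm
  -- the face F'
  have hface : IsFace n (insert w (G.erase L[ℓ])) := by
    constructor
    · intro v hv
      rw [Finset.mem_insert] at hv
      rcases hv with rfl | hv
      · have g0 := hlow 0; have g0' := (hle 0).trans (pr_range hG.1 hvmem 0).2
        have g1 := hlow 1; have g1' := (hle 1).trans (pr_range hG.1 hvmem 1).2
        have g2 := hlow 2; have g2' := (hle 2).trans (pr_range hG.1 hvmem 2).2
        rw [show pr 0 v = v.1 from rfl] at g0 g0'
        rw [show pr 1 v = v.2.1 from rfl] at g1 g1'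
        rw [show pr 2 v = v.2.2 from rfl] at g2 g2'
        refine ⟨?_, ?_, ?_⟩ <;> rw [Finset.mem_Icc] <;> omega
      · exact hG.1.1 v (Finset.mem_of_mem_erase hv)
    · intro a ha b hb hab
      rw [Finset.mem_insert] at ha hb
      have comp : ∀ x ∈ G.erase L[ℓ], slt w x ∨ slt x w := by
        intro x hx
        rw [Finset.mem_erase, ← ht, List.mem_toFinset, List.mem_iff_getElem] at hx
        obtain ⟨hne, j, hj, rfl⟩ := hx
        have hjℓ : j ≠ ℓ := by intro h; subst h; exact hne rfl
        rcases Nat.lt_or_ge j ℓ with h | h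
        · exact Or.inr (hltw j hj h)
        · exact Or.inl (hwlt j hj (by omega))
      rcases ha with rfl | ha <;> rcases hb with rfl | hb
      · exact absurd rfl hab
      · exact comp b hb
      · exact (comp a ha).symm
      · exact hG.1.2 a (Finset.mem_of_mem_erase ha) b (Finset.mem_of_mem_erase hb) hab
  obtain ⟨H, hH, hFH⟩ := face_to_facet hface
  have hsub : G.erase L[ℓ] ⊆ H := (Finset.subset_insert _ _).trans hFH
  have hFcard : (insert w (G.erase L[ℓ])).card = L.length := by
    rw [Finset.card_insert_of_notMem hwnotin, Finset.card_erase_of_mem hvmem]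
    omega
  have hHge : L.length ≤ H.card := hFcard ▸ Finset.card_le_card hFH
  refine ⟨H, hH, ?_, hsub⟩
  rcases eq_or_lt_of_le hHge with hEq | hLt
  · -- H = F', same cardinality: lex comparison
    have hHF : H = insert w (G.erase L[ℓ]) :=
      (Finset.eq_of_subset_of_card_le hFH (by omega)).symm
    right
    refine ⟨by omega, L.set ℓ w, L, chain'_set hs hℓ hltw hwlt, hs, ?_, ht, ?_⟩
    · rw [toFinset_set hs hℓ hwne, ht, hHF]
    · have hsplit : L.set ℓ w = L.take ℓ ++ w :: L.drop (ℓ+1) := by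
        rw [List.set_eq_take_append_cons_drop, if_pos hℓ]
      have hLd : L = L.take ℓ ++ L[ℓ] :: L.drop (ℓ+1) := by
        conv_lhs => rw [← List.take_append_drop ℓ L, List.drop_eq_getElem_cons hℓ]
      obtain ⟨A, D, h1, h2⟩ : ∃ A D, L.set ℓ w = A ++ w :: D ∧
          List.Lex (· < ·) (sigmaWord (A ++ w :: D)) (sigmaWord (A ++ L[ℓ] :: D)) ∧
          L = A ++ L[ℓ] :: D :=
        ⟨L.take ℓ, L.drop (ℓ+1), hsplit, lex_of_mid _ _ _ _ _ hlex, hLd⟩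
      rw [h1, h2.2]
      exact h2.1
  · exact Or.inl (by omega)

/-- Lemma 6.1: a facet `G` of `Δ(n)` with at least two vertices is a homology facet
(i.e. attaches along its whole boundary in the shelling order `O`) if and only if all
of its vertices satisfy the B-condition. -/
theorem homology_facet_iff_BCond (n : ℕ) (hn : 1 ≤ n) (G : Finset V)
    (hG : IsFacet n G) (hr : 2 ≤ G.card)
    (L : List V) (hs : L.Chain' slt) (ht : L.toFinset = G) :
    (∀ v ∈ G, ∃ H : Finset V, IsFacet n H ∧ OPrec H G ∧ G.erase v ⊆ H) ↔
      (∀ ℓ : ℕ, ∀ h : ℓ < L.length, BCond L ℓ h) := by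
  constructor
  · intro h1 ℓ hℓ

    by_contra hnB
    have hnd := chain_nodup hs
    have hcard : G.card = L.length := by rw [← ht, List.toFinset_card_of_nodup hnd]
    have hvmem : L[ℓ] ∈ G := mem_of_getElem ht hℓ
    have hrL : 2 ≤ L.length := by omega
    unfold BCond at hnB
    push_neg at hnB
    simp only [List.get_eq_getElem] at hnB
    obtain ⟨hn1, hn2⟩ := hnB
    have hnb1 : ℓ = 0 → ∀ c, pr c (L[ℓ]) = 1 := by
      intro h0 c
      subst h0
      have h := hn1 rfl
      obtain ⟨ha, hb, hc⟩ := hG.1.1 _ hvmem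
      rw [Finset.mem_Icc] at ha hb hc
      fin_cases c <;> simp [pr] <;> omega
    have hnb2 : 0 < ℓ → ∀ c, pr c (L[ℓ]) = pr c (L[ℓ-1]'(by omega)) + 1 := by
      intro h0 c
      have h := hn2 h0
      have hch := chain_get hs (show ℓ - 1 < L.length by omega) hℓ (by omega)
      obtain ⟨ha, hb, hc⟩ := hch
      fin_cases c <;> simp [pr] <;> omega
    -- the special coordinate c₀
    obtain ⟨c₀, hc₀⟩ : ∃ c, (∀ _h : ℓ + 1 < L.length, pr c (L[ℓ+1]) = pr c L[ℓ] + 1) ∧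
        (ℓ + 1 = L.length → pr c L[ℓ] = n) := by
      rcases eq_or_lt_of_le (show ℓ + 1 ≤ L.length by omega) with he | hlt
      · obtain ⟨c, hc⟩ := M3 hG hs ht (by omega)
        refine ⟨c, fun h => absurd h (by omega), fun _ => ?_⟩
        have hee : L.length - 1 = ℓ := by omega
        simp only [hee] at hc
        exact hc
      · obtain ⟨c, hc⟩ := M2 hG hs ht hlt
        exact ⟨c, fun _ => hc, fun h => absurd h (by omega)⟩
    obtain ⟨H, hHf, hOP, hsub⟩ := h1 (L[ℓ]) hvmem
    have hGsubH : ∀ j (hj : j < L.length), j ≠ ℓ → L[j] ∈ H := by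
      intro j hj hjℓ
      refine hsub (Finset.mem_erase.mpr ⟨?_, mem_of_getElem ht hj⟩)
      intro he
      exact hjℓ ((List.Nodup.getElem_inj_iff hnd).mp he)
    -- the key structural fact about elements of H outside G.erase
    have hmain : ∀ u ∈ H, u ∉ G.erase (L[ℓ]) →
        (∀ c, pr c (L[ℓ]) ≤ pr c u) ∧ pr c₀ u = pr c₀ (L[ℓ]) := by
      intro u huH hune
      by_cases huv : u = L[ℓ]
      · subst huv; exact ⟨fun c => le_refl _, rfl⟩
      have hunG : u ∉ G := fun h => hune (Finset.mem_erase.mpr ⟨huv, h⟩)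
      have hucomp : ∀ j (hj : j < L.length), j ≠ ℓ → slt u (L[j]) ∨ slt (L[j]) u := by
        intro j hj hjℓ
        refine hHf.1.2 u huH (L[j]) (hGsubH j hj hjℓ) ?_
        intro he
        exact hunG (by rw [he]; exact mem_of_getElem ht hj)
      have hurange := fun c => pr_range hHf.1 huH c
      have hDOWN : ∀ m, m < ℓ → ∀ hm : m < L.length, ¬ slt u (L[m]) := by
        intro m
        induction m with
        | zero =>
          intro _ hm hlt
          obtain ⟨c, hc⟩ := M1 hG hs ht (by omega)
          have := slt_iff_pr.mp hlt c
          have := (hurange c).1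
          omega
        | succ m ih =>
          intro hmℓ hm hlt
          rcases hucomp m (by omega) (by omega) with h | h
          · exact ih (by omega) (by omega) h
          · obtain ⟨c, hc⟩ := M2 hG hs ht (i := m) (by omega)
            have g1 := slt_iff_pr.mp h c
            have g2 := slt_iff_pr.mp hlt c
            omega
      have hUP : ∀ k m, ℓ < m → ∀ hm : m < L.length, L.length ≤ m + 1 + k →
          ¬ slt (L[m]) u := by
        intro k
        induction k with
        | zero =>
          intro m hℓm hm hk hlt
          obtain ⟨c, hc⟩ := M3 hG hs ht (by omega)
          have g1 := slt_iff_pr.mp hlt c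
          have g2 := (hurange c).2
          have he : L.length - 1 = m := by omega
          simp only [he] at hc
          omega
        | succ k ih =>
          intro m hℓm hm hk hlt
          rcases eq_or_lt_of_le (show m + 1 ≤ L.length by omega) with he | hlt2
          · obtain ⟨c, hc⟩ := M3 hG hs ht (by omega)
            have g1 := slt_iff_pr.mp hlt c
            have g2 := (hurange c).2
            have he2 : L.length - 1 = m := by omega
            simp only [he2] at hc
            omega
          · rcases hucomp (m+1) hlt2 (by omega) with h | h
            · obtain ⟨c, hc⟩ := M2 hG hs ht (i := m) hlt2
              have g1 := slt_iff_pr.mp h c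
              have g2 := slt_iff_pr.mp hlt c
              omega
            · exact ih (m+1) (by omega) hlt2 (by omega) h
      have hge : ∀ c, pr c (L[ℓ]) ≤ pr c u := by
        intro c
        rcases Nat.eq_zero_or_pos ℓ with h0 | h0
        · rw [hnb1 h0 c]
          exact (hurange c).1
        · have hp : slt (L[ℓ-1]'(by omega)) u := by
            rcases hucomp (ℓ-1) (by omega) (by omega) with h | h
            · exact absurd h (hDOWN (ℓ-1) (by omega) (by omega))
            · exact h
          have := slt_iff_pr.mp hp c
          rw [hnb2 h0 c]
          omega
      refine ⟨hge, ?_⟩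
      have hle2 : pr c₀ u ≤ pr c₀ (L[ℓ]) := by
        rcases eq_or_lt_of_le (show ℓ + 1 ≤ L.length by omega) with he | hlt2
        · rw [hc₀.2 he]
          exact (hurange c₀).2
        · have hp : slt u (L[ℓ+1]) := by
            rcases hucomp (ℓ+1) hlt2 (by omega) with h | h
            · exact h
            · exact absurd h (hUP L.length (ℓ+1) (by omega) hlt2 (by omega))
          have hq := slt_iff_pr.mp hp c₀
          rw [hc₀.1 hlt2] at hq
          omega
      exact le_antisymm hle2 (hge c₀)
    -- extract the unique extra vertex w
    have hne : H ≠ G.erase (L[ℓ]) := by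
      intro he
      have hHG : H = G := hHf.2 G hG.1 (he ▸ Finset.erase_subset _ _)
      rw [hHG] at he
      have hce := Finset.card_erase_of_mem hvmem
      rw [← he] at hce
      omega
    obtain ⟨w, hwH, hwn⟩ := Finset.exists_of_ssubset
      (Finset.ssubset_iff_subset_ne.mpr ⟨hsub, fun h => hne h.symm⟩)
    obtain ⟨hwge, hwc₀⟩ := hmain w hwH hwn
    have hHeq : H = insert w (G.erase (L[ℓ])) := by
      apply Finset.Subset.antisymm
      · intro x hx
        rw [Finset.mem_insert]
        by_cases hxe : x ∈ G.erase (L[ℓ])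
        · exact Or.inr hxe
        · left
          obtain ⟨hxge, hxc₀⟩ := hmain x hx hxe
          by_cases hxw : x = w
          · exact hxw
          · rcases hHf.1.2 x hx w hwH hxw with h | h
            · have := slt_iff_pr.mp h c₀; omega
            · have := slt_iff_pr.mp h c₀; omega
      · exact Finset.insert_subset hwH hsub
    have hHcard : H.card = L.length := by
      rw [hHeq, Finset.card_insert_of_notMem hwn, Finset.card_erase_of_mem hvmem]
      omega
    have hwne : ∀ j (hj : j < L.length), j ≠ ℓ → w ≠ L[j] := by
      intro j hj hjℓ he
      apply hwn
      rw [Finset.mem_erase]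
      constructor
      · rw [he]
        intro hee
        exact hjℓ ((List.Nodup.getElem_inj_iff hnd).mp hee)
      · rw [he]; exact mem_of_getElem ht hj
    have hbelow : ∀ i (hi : i < L.length), i < ℓ → slt (L[i]) w := by
      intro i hi hiℓ
      exact slt_iff_pr.mpr fun c =>
        lt_of_lt_of_le (slt_iff_pr.mp (chain_get hs hi hℓ hiℓ) c) (hwge c)
    have habove : ∀ j (hj : j < L.length), ℓ < j → slt w (L[j]) := by
      intro j hj hℓj
      rcases hHf.1.2 w hwH (L[j]) (hGsubH j hj (by omega)) (hwne j hj (by omega)) with h | h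
      · exact h
      · have g1 := slt_iff_pr.mp h c₀
        have g2 := slt_iff_pr.mp (chain_get hs hℓ hj hℓj) c₀
        omega
    -- derive the contradiction from OPrec H G
    rcases hOP with hlt | ⟨hceq, LF, LG, cF, cG, tF, tG, hlex⟩
    · omega
    · have hLG : LG = L := chain_unique cG hs (by rw [tG, ht])
      have hLF : LF = L.set ℓ w :=
        chain_unique cF (chain'_set hs hℓ hbelow habove)
          (by rw [tF, toFinset_set hs hℓ hwne, ht, ← hHeq])
      rw [hLG, hLF] at hlex
      have hsplit : L.set ℓ w = L.take ℓ ++ w :: L.drop (ℓ+1) := by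
        rw [List.set_eq_take_append_cons_drop, if_pos hℓ]
      have hLd : L = L.take ℓ ++ (L[ℓ]) :: L.drop (ℓ+1) := by
        conv_lhs => rw [← List.take_append_drop ℓ L, List.drop_eq_getElem_cons hℓ]
      obtain ⟨A, D, hA1, hA2⟩ : ∃ A D, L.set ℓ w = A ++ w :: D ∧ L = A ++ (L[ℓ]) :: D :=
        ⟨_, _, hsplit, hLd⟩
      rw [hA1, hA2] at hlex
      have g0 := hwge 0
      have g1 := hwge 1
      have g2 := hwge 2
      rw [show pr 0 (L[ℓ]) = (L[ℓ]).1 from rfl, show pr 0 w = w.1 from rfl] at g0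
      rw [show pr 1 (L[ℓ]) = (L[ℓ]).2.1 from rfl, show pr 1 w = w.2.1 from rfl] at g1
      rw [show pr 2 (L[ℓ]) = (L[ℓ]).2.2 from rfl, show pr 2 w = w.2.2 from rfl] at g2
      exact not_lex_of_ge A (L[ℓ]) w D g0 g1 g2 hlex
  · intro hB v hv

    rw [← ht, List.mem_toFinset, List.mem_iff_getElem] at hv
    obtain ⟨ℓ, hℓ, rfl⟩ := hv
    have hB' := hB ℓ hℓ
    unfold BCond at hB'
    simp only [List.get_eq_getElem] at hB'
    have hvmem : L[ℓ] ∈ G := mem_of_getElem ht hℓ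
    obtain ⟨hx, hy, hz⟩ := hG.1.1 _ hvmem
    rw [Finset.mem_Icc] at hx hy hz
    rcases hB' with ⟨hℓ0, hco⟩ | ⟨hℓ0, hco⟩
    · subst hℓ0
      rcases hco with hc | hc | hc
      · refine key hG hs ht hℓ (w := (L[0].1 - 1, L[0].2.1, L[0].2.2)) ?_ ?_ ?_ ?_
        · intro c; fin_cases c <;> simp [pr] <;> omega
        · left; simp; omega
        · intro c; fin_cases c <;> simp [pr] <;> omega
        · intro h0; omega
      · refine key hG hs ht hℓ (w := (L[0].1, L[0].2.1 - 1, L[0].2.2)) ?_ ?_ ?_ ?_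
        · intro c; fin_cases c <;> simp [pr] <;> omega
        · right; refine ⟨rfl, ?_⟩; left; simp; omega
        · intro c; fin_cases c <;> simp [pr] <;> omega
        · intro h0; omega
      · refine key hG hs ht hℓ (w := (L[0].1, L[0].2.1, L[0].2.2 - 1)) ?_ ?_ ?_ ?_
        · intro c; fin_cases c <;> simp [pr] <;> omega
        · right; refine ⟨rfl, ?_⟩; right; refine ⟨rfl, ?_⟩; simp; omega
        · intro c; fin_cases c <;> simp [pr] <;> omega
        · intro h0; omega
    · have hch := chain_get hs (show ℓ - 1 < L.length by omega) hℓ (by omega)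
      obtain ⟨ha1, ha2, ha3⟩ := hch
      rcases hco with hc | hc | hc
      · refine key hG hs ht hℓ (w := (L[ℓ].1 - 1, L[ℓ].2.1, L[ℓ].2.2)) ?_ ?_ ?_ ?_
        · intro c; fin_cases c <;> simp [pr] <;> omega
        · left; simp; omega
        · intro c; fin_cases c <;> simp [pr] <;> omega
        · intro h0; refine ⟨?_, ?_, ?_⟩ <;> simp <;> omega
      · refine key hG hs ht hℓ (w := (L[ℓ].1, L[ℓ].2.1 - 1, L[ℓ].2.2)) ?_ ?_ ?_ ?_
        · intro c; fin_cases c <;> simp [pr] <;> omega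
        · right; refine ⟨rfl, ?_⟩; left; simp; omega
        · intro c; fin_cases c <;> simp [pr] <;> omega
        · intro h0; refine ⟨?_, ?_, ?_⟩ <;> simp <;> omega
      · refine key hG hs ht hℓ (w := (L[ℓ].1, L[ℓ].2.1, L[ℓ].2.2 - 1)) ?_ ?_ ?_ ?_
        · intro c; fin_cases c <;> simp [pr] <;> omega
        · right; refine ⟨rfl, ?_⟩; right; refine ⟨rfl, ?_⟩; simp; omega
        · intro c; fin_cases c <;> simp [pr] <;> omega
        · intro h0; refine ⟨?_, ?_, ?_⟩ <;> simp <;> omega
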